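/- Let 2 ≤ j ≤ r−2 with n_{π(r),j} a free variable of wn, and let l ≤ r. If the set D^{(0)}_{j,l} := D₁(n_{π(r),j}) ∩ D_{↗,l}(n_{π(r),j}) is nonempty, then n_{l,r} is a free variable of wn (i.e. (l,r) ∈ Inv(π⁻¹)); furthermore, if 1_{π(k)} ∈ D^{(0)}_{j,l} then n_{π(k),r} is a free variable of wn. -/
import Mathlib


open Finset

/-- positions (row, column) in the matrix `wn`, 0-indexed -/
abbrev Pos (r : ℕ) := Fin r × Fin r

/-- the entry of `wn` at position `p` is nonzero: it is the `1` of its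
column (`p.2 = π p.1`) or a free variable. -/
abbrev IsNonzero {r : ℕ} (π : Equiv.Perm (Fin r)) (p : Pos r) : Prop :=
  p.2 = π p.1 ∨ (π p.1 < p.2 ∧ π.symm p.2 < p.1)

/-- the entry of `wn` at position `p` is a free variable, i.e.
`(π p.1, p.2) ∈ Inv (π⁻¹)` -/
abbrev IsFree {r : ℕ} (π : Equiv.Perm (Fin r)) (p : Pos r) : Prop :=
  π p.1 < p.2 ∧ π.symm p.2 < p.1

/-- a step of a path: move left or up to the neighboring nonzero entry -/
def Step {r : ℕ} (π : Equiv.Perm (Fin r)) (x y : Pos r) : Prop :=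
  (x.1 = y.1 ∧ y.2 < x.2 ∧ IsNonzero π y ∧
      ∀ c : Fin r, y.2 < c → c < x.2 → ¬ IsNonzero π (x.1, c)) ∨
  (x.2 = y.2 ∧ y.1 < x.1 ∧ IsNonzero π y ∧
      ∀ a : Fin r, y.1 < a → a < x.1 → ¬ IsNonzero π (a, x.2))

/-- a path: a nonempty list of nonzero entries, each step going up or left to
a neighboring nonzero entry.  The head is the origin, the last entry the
destination. -/
def IsPath {r : ℕ} (π : Equiv.Perm (Fin r)) (l : List (Pos r)) : Prop :=
  l ≠ [] ∧ (∀ x ∈ l, IsNonzero π x) ∧ l.Chain' (Step π)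

/-- `S` is a set of pairwise disjoint paths connecting `A` bijectively to `B`,
i.e. `S ∈ 𝒫(A → B)` -/
def Conn {r : ℕ} (π : Equiv.Perm (Fin r)) (A B : Finset (Pos r))
    (S : Finset (List (Pos r))) : Prop :=
  (∀ l ∈ S, IsPath π l) ∧
  (∀ l ∈ S, ∀ l' ∈ S, l ≠ l' → ∀ x ∈ l, x ∉ l') ∧
  (∀ a, a ∈ A ↔ ∃ l ∈ S, l.head? = some a) ∧
  (∀ b, b ∈ B ↔ ∃ l ∈ S, l.getLast? = some b)

/-- the monomial given by the product of the free variables traversed by a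
path, in `ℤ[{n_α}]` -/
noncomputable def uPath {r : ℕ} (π : Equiv.Perm (Fin r)) (l : List (Pos r)) :
    MvPolynomial (Pos r) ℤ :=
  ∏ x ∈ l.toFinset.filter (fun x => IsFree π x), MvPolynomial.X x

/-- `u(S)` for a set of disjoint paths `S` -/
noncomputable def uSet {r : ℕ} (π : Equiv.Perm (Fin r))
    (S : Finset (List (Pos r))) : MvPolynomial (Pos r) ℤ :=
  ∏ l ∈ S, uPath π l

/-- `P(A → B)`: sum of `u(S)` over all sets of disjoint paths connecting
`A` to `B` -/
noncomputable def Psum {r : ℕ} (π : Equiv.Perm (Fin r)) (A B : Finset (Pos r)) :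
    MvPolynomial (Pos r) ℤ :=
  ∑ᶠ S ∈ {S : Finset (List (Pos r)) | Conn π A B S}, uSet π S

/-- every positive-length path whose origin lies in the rightmost column
starts by going left -/
def StartsLeft (r : ℕ) (l : List (Pos r)) : Prop :=
  ∀ x ∈ l.head?, (x.2 : ℕ) = r - 1 → ∀ y ∈ l.tail.head?, y.1 = x.1

/-- `P_L(A → B)` -/
noncomputable def PLsum {r : ℕ} (π : Equiv.Perm (Fin r))
    (A B : Finset (Pos r)) : MvPolynomial (Pos r) ℤ :=
  ∑ᶠ S ∈ {S : Finset (List (Pos r)) | Conn π A B S ∧ ∀ l ∈ S, StartsLeft r l},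
    uSet π S

/-- the column of the rightmost nonzero entry of row `a` -/
def gammaCol {r : ℕ} (π : Equiv.Perm (Fin r)) (a : Fin r) : Fin r :=
  (Finset.univ.filter fun c => IsNonzero π (a, c)).max'
    ⟨π a, Finset.mem_filter.2 ⟨Finset.mem_univ _, Or.inl rfl⟩⟩

/-- `γ(row a)`: the rightmost nonzero entry of row `a`, as a position -/
def gammaPos {r : ℕ} (π : Equiv.Perm (Fin r)) (a : Fin r) : Pos r :=
  (a, gammaCol π a)

/-- `ρ(row a)`: the product of the nonzero entries (equivalently, of the free
variables) of row `a` -/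
noncomputable def rho {r : ℕ} (π : Equiv.Perm (Fin r)) (a : Fin r) :
    MvPolynomial (Pos r) ℤ :=
  ∏ c ∈ Finset.univ.filter (fun c => IsFree π (a, c)),
    MvPolynomial.X ((a, c) : Pos r)
/-- the last (rightmost column / bottom row) index -/
def lastIdx (r : ℕ) [NeZero r] : Fin r :=
  ⟨r - 1, by have := Nat.pos_of_ne_zero (NeZero.ne r); omega⟩

/-- rows of the submatrix `M_w(n_{π(d),j})` containing a `1`:
rows `a` with `π⁻¹(j) ≤ a ≤ d` whose `1` lies in column `≥ j` -/
def destRows {r : ℕ} (π : Equiv.Perm (Fin r)) (d j : Fin r) : Finset (Fin r) :=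
  Finset.univ.filter fun a => π.symm j ≤ a ∧ a ≤ d ∧ j ≤ π a

/-- `D(n_{π(d),j})`: the destinations of the free variable at position `(d,j)` -/
def Dest {r : ℕ} (π : Equiv.Perm (Fin r)) (d j : Fin r) : Finset (Pos r) :=
  (destRows π d j).image fun a => (a, π a)

/-- `O(n_{π(d),j})`: the origins — the rightmost nonzero entry of the bottom
row `d`, and the rightmost nonzero entries of the rows containing a
destination other than the top destination `1_j` -/
def Orig {r : ℕ} (π : Equiv.Perm (Fin r)) (d j : Fin r) : Finset (Pos r) :=
  insert (gammaPos π d) (((destRows π d j).erase (π.symm j)).image (gammaPos π))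

/-- `O₁(n_{π(d),j})`: origins in the rightmost column, above the bottom
origin, lying directly below a free variable which is not an origin -/
def O1 {r : ℕ} (π : Equiv.Perm (Fin r)) (d j : Fin r) : Finset (Pos r) :=
  (Orig π d j).filter fun x =>
    (x.2 : ℕ) = r - 1 ∧ x.1 < d ∧
      ∃ t : Fin r, (t : ℕ) + 1 = (x.1 : ℕ) ∧ IsFree π (t, x.2) ∧
        (t, x.2) ∉ Orig π d j

/-- `D₁(n_{π(d),j})`: destinations in the rows containing an element of `O₁` -/
def D1 {r : ℕ} (π : Equiv.Perm (Fin r)) (d j : Fin r) : Finset (Pos r) :=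
  (Dest π d j).filter fun y => ∃ x ∈ O1 π d j, x.1 = y.1

/-- `D_{↗,l}(n_{π(d),j})`: destinations equal to `1_l` or above and to the
right of `1_l` -/
def Dne {r : ℕ} (π : Equiv.Perm (Fin r)) (d j l : Fin r) : Finset (Pos r) :=
  (Dest π d j).filter fun y =>
    y = ((π.symm l, l) : Pos r) ∨ (y.1 < π.symm l ∧ l < y.2)
lemma orig_nonzero {r : ℕ} (π : Equiv.Perm (Fin r)) (d j : Fin r)
    {x : Pos r} (hx : x ∈ Orig π d j) : IsNonzero π x := by
  have hg : ∀ b : Fin r, IsNonzero π (gammaPos π b) := by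
    intro b
    have := Finset.max'_mem (Finset.univ.filter fun c => IsNonzero π (b, c))
      ⟨π b, Finset.mem_filter.2 ⟨Finset.mem_univ _, Or.inl rfl⟩⟩
    exact (Finset.mem_filter.1 this).2
  rcases Finset.mem_insert.1 hx with h | h
  · exact h ▸ hg d
  · rcases Finset.mem_image.1 h with ⟨b, _, hb⟩
    exact hb ▸ hg b

lemma D1_free {r : ℕ} [NeZero r] (π : Equiv.Perm (Fin r)) (j : Fin r)
    {y : Pos r} (hy : y ∈ D1 π (lastIdx r) j) : IsFree π (y.1, lastIdx r) := by
  rcases Finset.mem_filter.1 hy with ⟨-, x, hxO1, hx1⟩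
  rcases Finset.mem_filter.1 hxO1 with ⟨hxO, hx2, -, t, ht1, htf, -⟩
  have hx2' : x.2 = lastIdx r := Fin.ext hx2
  have htl : π.symm (lastIdx r) < t := by rw [hx2'] at htf; exact htf.2
  have hty : (t : ℕ) < (y.1 : ℕ) := by omega
  have hsl : π.symm (lastIdx r) < y.1 := lt_of_lt_of_le htl (le_of_lt hty)
  have hnz : IsNonzero π (y.1, lastIdx r) := by
    have := orig_nonzero π (lastIdx r) j hxO
    rwa [show x = (y.1, lastIdx r) from Prod.ext hx1 hx2'] at this
  rcases hnz with h | h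
  · have h' : lastIdx r = π y.1 := h
    exact absurd (by rw [h']; simp : π.symm (lastIdx r) = y.1) (ne_of_lt hsl)
  · exact h

/-- If `D⁰_{j,l} = D₁(n_{π(r),j}) ∩ D_{↗,l}(n_{π(r),j})` is nonempty then
`n_{l,r}` is a free variable; moreover, if `1_{π(k)} ∈ D⁰_{j,l}` then
`n_{π(k),r}` is a free variable. -/
theorem D0_free_variables {r : ℕ} [NeZero r] (π : Equiv.Perm (Fin r))
    (j l : Fin r) (hj1 : 1 ≤ (j : ℕ)) (hj2 : (j : ℕ) ≤ r - 3)
    (hfr : IsFree π (lastIdx r, j)) :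
    ((D1 π (lastIdx r) j ∩ Dne π (lastIdx r) j l).Nonempty →
      IsFree π (π.symm l, lastIdx r)) ∧
    (∀ k : Fin r, ((k, π k) : Pos r) ∈ D1 π (lastIdx r) j ∩ Dne π (lastIdx r) j l →
      IsFree π (k, lastIdx r)) := by
  constructor
  · rintro ⟨y, hy⟩
    rcases Finset.mem_inter.1 hy with ⟨hy1, hy2⟩
    have hfree := D1_free π j hy1
    rcases (Finset.mem_filter.1 hy2).2 with h | ⟨h1, h2⟩
    · rw [show π.symm l = y.1 from congrArg Prod.fst h.symm]
      exact hfree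
    · refine ⟨?_, lt_trans hfree.2 h1⟩
      show π (π.symm l) < lastIdx r
      rw [π.apply_symm_apply]
      calc l < y.2 := h2
        _ ≤ _ := by
          rcases (Finset.mem_filter.1 hy1).1 with h
          rcases Finset.mem_image.1 h with ⟨a, -, ha⟩
          have hy2a : y.2 = π a := congrArg Prod.snd ha.symm
          have hy1a : y.1 = a := congrArg Prod.fst ha.symm
          rw [hy2a]
          have : π a < lastIdx r := by rw [← hy1a]; exact hfree.1
          exact le_of_lt this
  · intro k hk
    exact D1_free π j (Finset.mem_inter.1 hk).1
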